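/- The derived subgroup D(W₆) = A₆' ⋊ A₆ (where W₆ is the Weyl group of type B₆ realized as signed permutation 6×6 matrices) acts irreducibly on ℂ⁶. -/

import Mathlib

noncomputable section
open Matrix Complex

/-- The signed permutation matrix with underlying permutation `σ` and signs `a`. -/
def sp (σ : Equiv.Perm (Fin 6)) (a : Fin 6 → ℂ) : Matrix (Fin 6) (Fin 6) ℂ :=
  Matrix.of fun i j => if i = σ j then a j else 0

/-- All entries are `±1`. -/
def signs (a : Fin 6 → ℂ) : Prop := ∀ k, a k = 1 ∨ a k = -1

/-- The Weyl group of type `B₆`: all signed permutation matrices. -/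
def W6Set : Set (GL (Fin 6) ℂ) :=
  {g | ∃ σ a, signs a ∧ (g : Matrix (Fin 6) (Fin 6) ℂ) = sp σ a}

/-- `W₆⁺`: signed permutation matrices of determinant 1. -/
def W6plusSet : Set (GL (Fin 6) ℂ) :=
  {g | ∃ σ a, signs a ∧ (g : Matrix (Fin 6) (Fin 6) ℂ) = sp σ a ∧
    (g : Matrix (Fin 6) (Fin 6) ℂ).det = 1}

/-- `W₆'` (type `D₆`): signed permutation matrices with product of entries 1. -/
def W6'Set : Set (GL (Fin 6) ℂ) :=
  {g | ∃ σ a, signs a ∧ (∏ k, a k) = 1 ∧ (g : Matrix (Fin 6) (Fin 6) ℂ) = sp σ a}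

/-- `A₆'`: diagonal sign matrices with product of entries 1. -/
def A6'Set : Set (GL (Fin 6) ℂ) :=
  {g | ∃ a, signs a ∧ (∏ k, a k) = 1 ∧ (g : Matrix (Fin 6) (Fin 6) ℂ) = Matrix.diagonal a}

/-- `i · Id` as an element of `GL₆(ℂ)`. -/
def iId : GL (Fin 6) ℂ :=
  ⟨Matrix.diagonal (fun _ => Complex.I), Matrix.diagonal (fun _ => -Complex.I),
    by simp [Matrix.diagonal_mul_diagonal, Complex.I_mul_I],
    by simp [Matrix.diagonal_mul_diagonal, Complex.I_mul_I]⟩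

/-- For a monomial matrix, the product of its nonzero entries (γ). -/
def gam (m : Matrix (Fin 6) (Fin 6) ℂ) : ℂ := ∏ j, ∑ i, m i j

/-- `𝒲₆ = ⟨W₆⁺, i·Id⟩`. -/
def CW6Sub : Subgroup (GL (Fin 6) ℂ) := Subgroup.closure (W6plusSet ∪ {iId})

/-- `𝒲₆' = 𝒲₆ ∩ ker γ`. -/
def CW6'Set : Set (GL (Fin 6) ℂ) :=
  {g | g ∈ CW6Sub ∧ gam (g : Matrix (Fin 6) (Fin 6) ℂ) = 1}

def CW6'Sub : Subgroup (GL (Fin 6) ℂ) := Subgroup.closure CW6'Set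

def W6Sub : Subgroup (GL (Fin 6) ℂ) := Subgroup.closure W6Set
def W6plusSub : Subgroup (GL (Fin 6) ℂ) := Subgroup.closure W6plusSet
def W6'Sub : Subgroup (GL (Fin 6) ℂ) := Subgroup.closure W6'Set


lemma sp_mul (σ τ : Equiv.Perm (Fin 6)) (a b : Fin 6 → ℂ) :
    sp σ a * sp τ b = sp (σ * τ) (fun k => a (τ k) * b k) := by
  ext i j
  simp only [sp, Matrix.mul_apply, Matrix.of_apply, Equiv.Perm.mul_apply]
  rw [Finset.sum_eq_single (τ j)]
  · simp
    congr
  · intro k _ hk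
    rw [if_neg hk, mul_zero]
  · simp

lemma sp_one : sp 1 (fun _ => 1) = 1 := by
  ext i j
  simp [sp, Matrix.one_apply, eq_comm]
  congr

def permGL (σ : Equiv.Perm (Fin 6)) : GL (Fin 6) ℂ :=
  ⟨sp σ (fun _ => 1), sp σ⁻¹ (fun _ => 1),
   by rw [sp_mul]; simpa using sp_one,
   by rw [sp_mul]; simpa using sp_one⟩

def diagGL (a : Fin 6 → ℂ) (ha : signs a) : GL (Fin 6) ℂ :=
  ⟨Matrix.diagonal a, Matrix.diagonal a,
   by rw [Matrix.diagonal_mul_diagonal]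
      have : (fun k => a k * a k) = fun _ => (1:ℂ) := by
        funext k; rcases ha k with h | h <;> rw [h] <;> ring
      rw [this]; exact Matrix.diagonal_one,
   by rw [Matrix.diagonal_mul_diagonal]
      have : (fun k => a k * a k) = fun _ => (1:ℂ) := by
        funext k; rcases ha k with h | h <;> rw [h] <;> ring
      rw [this]; exact Matrix.diagonal_one⟩

lemma diag_eq_sp (a : Fin 6 → ℂ) : Matrix.diagonal a = sp 1 a := by
  ext i j
  by_cases h : i = j <;> simp [sp, Matrix.diagonal, eq_comm, h]

lemma sp_mulVec (σ : Equiv.Perm (Fin 6)) (v : Fin 6 → ℂ) :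
    Matrix.mulVec (sp σ (fun _ => 1)) v = fun i => v (σ⁻¹ i) := by
  funext i
  simp only [Matrix.mulVec, dotProduct, sp, Matrix.of_apply]
  rw [Finset.sum_eq_single (σ⁻¹ i)]
  · simp
  · intro k _ hk
    rw [if_neg, zero_mul]
    intro h; exact hk (by rw [h]; simp)
  · simp

lemma fin6_triple (i : Fin 6) : ∃ j k : Fin 6, i ≠ j ∧ i ≠ k ∧ j ≠ k := by
  revert i; decide

lemma fin6_pair (i m : Fin 6) : ∃ c : Fin 6, c ≠ i ∧ c ≠ m := by
  revert i m; decide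

theorem stmt_5 :
    ∀ U : Submodule ℂ (Fin 6 → ℂ),
      (∀ g : GL (Fin 6) ℂ,
        (∃ σ a, Equiv.Perm.sign σ = 1 ∧ signs a ∧ (∏ k, a k) = 1 ∧
          (g : Matrix (Fin 6) (Fin 6) ℂ) = sp σ a) →
        ∀ v ∈ U, Matrix.mulVec (g : Matrix (Fin 6) (Fin 6) ℂ) v ∈ U) →
      U = ⊥ ∨ U = ⊤ := by
  intro U hU
  by_cases hbot : U = ⊥
  · exact Or.inl hbot
  right
  obtain ⟨v, hvU, hv0⟩ := (Submodule.ne_bot_iff U).mp hbot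
  -- diagonal sign matrices with evenly many -1's preserve U
  have hdiag : ∀ s : Finset (Fin 6), Even s.card →
      ∀ w ∈ U, (fun k => if k ∈ s then -w k else w k) ∈ U := by
    intro s hs w hw
    set a : Fin 6 → ℂ := fun k => if k ∈ s then -1 else 1 with ha
    have hsigns : signs a := fun k => by by_cases h : k ∈ s <;> simp [a, h]
    have hprod : (∏ k, a k) = 1 := by
      have h1 : (∏ k, a k) = ∏ k ∈ s, (-1 : ℂ) := by
        rw [ha, Finset.prod_ite_mem Finset.univ s (fun _ => (-1:ℂ)), Finset.univ_inter]
      rw [h1, Finset.prod_const, Even.neg_one_pow hs]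
    have hmem := hU (diagGL a hsigns)
      ⟨1, a, by simp, hsigns, hprod, by rw [← diag_eq_sp]; rfl⟩ w hw
    have hmv : Matrix.mulVec ((diagGL a hsigns : GL (Fin 6) ℂ) : Matrix (Fin 6) (Fin 6) ℂ) w
        = fun k => if k ∈ s then -w k else w k := by
      funext k
      show Matrix.mulVec (Matrix.diagonal a) w k = _
      rw [Matrix.mulVec_diagonal]
      by_cases h : k ∈ s <;> simp [a, h]
    rwa [hmv] at hmem
  -- even permutations preserve U
  have hperm : ∀ σ : Equiv.Perm (Fin 6), Equiv.Perm.sign σ = 1 →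
      ∀ w ∈ U, (fun k => w (σ⁻¹ k)) ∈ U := by
    intro σ hσ w hw
    have hmem := hU (permGL σ)
      ⟨σ, fun _ => 1, hσ, fun k => Or.inl rfl, by simp, rfl⟩ w hw
    rwa [show ((permGL σ : GL (Fin 6) ℂ) : Matrix (Fin 6) (Fin 6) ℂ) = sp σ (fun _ => 1) from rfl,
      sp_mulVec] at hmem
  -- projections onto pairs of coordinates
  have hproj : ∀ i j : Fin 6, i ≠ j → ∀ w ∈ U,
      (fun k => if k = i ∨ k = j then w k else 0) ∈ U := by
    intro i j hij w hw
    have hcard : ({i, j} : Finset (Fin 6)).card = 2 := Finset.card_pair hij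
    have h2 := hdiag {i, j} (by rw [hcard]; exact even_two) w hw
    have h3 : (2⁻¹ : ℂ) • (w - fun k => if k ∈ ({i,j} : Finset (Fin 6)) then -w k else w k) ∈ U :=
      Submodule.smul_mem _ _ (Submodule.sub_mem _ hw h2)
    convert h3 using 1
    funext k
    simp only [Pi.smul_apply, Pi.sub_apply, smul_eq_mul]
    by_cases h : k = i ∨ k = j
    · have hk : k ∈ ({i,j} : Finset (Fin 6)) := by
        rcases h with h | h <;> simp [h]
      rw [if_pos h, if_pos hk]; ring
    · have hk : k ∉ ({i,j} : Finset (Fin 6)) := by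
        simp only [Finset.mem_insert, Finset.mem_singleton]; exact h
      rw [if_neg h, if_neg hk]; ring
  obtain ⟨i, hvi⟩ := Function.ne_iff.mp hv0
  obtain ⟨j, k, hij, hik, hjk⟩ := fin6_triple i
  have h1 := hproj i j hij v hvU
  have h2 := hproj i k hik v hvU
  have h3 := hproj j k hjk v hvU
  have hu : ((fun m => if m = i ∨ m = j then v m else 0)
      + (fun m => if m = i ∨ m = k then v m else 0)
      - fun m => if m = j ∨ m = k then v m else 0) ∈ U :=
    Submodule.sub_mem _ (Submodule.add_mem _ h1 h2) h3
  have heq : ((fun m => if m = i ∨ m = j then v m else 0)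
      + (fun m => if m = i ∨ m = k then v m else 0)
      - fun m => if m = j ∨ m = k then v m else 0)
      = (2 * v i) • (Pi.single i 1 : Fin 6 → ℂ) := by
    funext m
    simp only [Pi.add_apply, Pi.sub_apply, Pi.smul_apply, smul_eq_mul, Pi.single_apply]
    by_cases e1 : m = i
    · subst e1
      rw [if_pos (Or.inl rfl), if_pos (Or.inl rfl), if_neg (by tauto), if_pos rfl]
      ring
    · by_cases e2 : m = j
      · subst e2
        rw [if_pos (Or.inr rfl), if_neg (by tauto), if_pos (Or.inl rfl), if_neg e1]
        ring
      · by_cases e3 : m = k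
        · rw [if_neg (by tauto), if_pos (Or.inr e3), if_pos (Or.inr e3), if_neg e1]
          ring
        · rw [if_neg (by tauto), if_neg (by tauto), if_neg (by tauto), if_neg e1]
          ring
  rw [heq] at hu
  have h2vi : (2 * v i : ℂ) ≠ 0 := mul_ne_zero two_ne_zero hvi
  have hsi : (Pi.single i 1 : Fin 6 → ℂ) ∈ U := by
    have := Submodule.smul_mem U (2 * v i)⁻¹ hu
    rwa [smul_smul, inv_mul_cancel₀ h2vi, one_smul] at this
  have hall : ∀ m : Fin 6, (Pi.single m 1 : Fin 6 → ℂ) ∈ U := by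
    intro m
    by_cases him : m = i
    · rw [him]; exact hsi
    obtain ⟨c, hci, hcm⟩ := fin6_pair i m
    set σ : Equiv.Perm (Fin 6) := Equiv.swap i c * Equiv.swap i m with hσdef
    have hσs : Equiv.Perm.sign σ = 1 := by
      rw [hσdef, _root_.map_mul, Equiv.Perm.sign_swap (Ne.symm hci), Equiv.Perm.sign_swap
        (fun h => him h.symm)]
      decide
    have hσi : σ i = m := by
      rw [hσdef]
      simp only [Equiv.Perm.mul_apply, Equiv.swap_apply_left]
      exact Equiv.swap_apply_of_ne_of_ne him (fun h => hcm h.symm)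
    have hmem := hperm σ hσs ((Pi.single i 1 : Fin 6 → ℂ)) hsi
    have : (fun x => (Pi.single i 1 : Fin 6 → ℂ) (σ⁻¹ x)) = (Pi.single m 1 : Fin 6 → ℂ) := by
      funext x
      simp only [Pi.single_apply]
      by_cases hx : x = m
      · rw [if_pos, if_pos hx]
        rw [hx, ← hσi, ← Equiv.Perm.mul_apply, inv_mul_cancel, Equiv.Perm.one_apply]
      · rw [if_neg, if_neg hx]
        intro h
        exact hx (by rw [← hσi, ← h, ← Equiv.Perm.mul_apply, mul_inv_cancel, Equiv.Perm.one_apply])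
    rwa [this] at hmem
  rw [Submodule.eq_top_iff']
  intro x
  have hx : x = ∑ m, x m • (Pi.single m 1 : Fin 6 → ℂ) := by
    conv_lhs => rw [← Finset.univ_sum_single x]
    refine Finset.sum_congr rfl fun m _ => ?_
    rw [← Pi.single_smul, smul_eq_mul, mul_one]
  rw [hx]
  exact Submodule.sum_mem _ fun m _ => Submodule.smul_mem _ _ (hall m)
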